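/- Fix an integer m ≥ 2 and a strictly increasing sequence (n_k)_{k≥0} of positive integers. For an integer j ≥ 1, let J_j = {k ≥ 1 : n_k ≤ j ≤ 2 n_{k−1}}. Then Σ_{k ∈ J_j} (n_k^{m−1} − n_{k−1}^{m−1}) / n_k^{m−1} ≤ 2^{m−1}, and hence Λ_j := Σ_{k ∈ J_j} ((n_k^{m−1} − n_{k−1}^{m−1}) / n_k^{m−1})^2 ≤ 4^{m−1}. -/

import Mathlib

/-- The `Λ_j` estimate for `m ≥ 2`: with `J_j = {k ≥ 1 : n_k ≤ j ≤ 2 n_{k-1}}`,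
`Σ_{k ∈ J_j} (n_k^{m-1} - n_{k-1}^{m-1})/n_k^{m-1} ≤ 2^{m-1}` and
`Λ_j = Σ_{k ∈ J_j} ((n_k^{m-1} - n_{k-1}^{m-1})/n_k^{m-1})² ≤ 4^{m-1}`. -/
theorem stmt_13 (m : ℕ) (hm : 2 ≤ m) (nk : ℕ → ℕ) (hmono : StrictMono nk)
    (hpos : ∀ k, 0 < nk k) (j : ℕ) (hj : 1 ≤ j) :
    ∑ k ∈ (Finset.range (j + 1)).filter
        (fun k => 1 ≤ k ∧ nk k ≤ j ∧ j ≤ 2 * nk (k - 1)),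
      ((nk k : ℝ) ^ (m - 1) - (nk (k - 1) : ℝ) ^ (m - 1)) / (nk k : ℝ) ^ (m - 1)
        ≤ 2 ^ (m - 1) ∧
    ∑ k ∈ (Finset.range (j + 1)).filter
        (fun k => 1 ≤ k ∧ nk k ≤ j ∧ j ≤ 2 * nk (k - 1)),
      (((nk k : ℝ) ^ (m - 1) - (nk (k - 1) : ℝ) ^ (m - 1)) / (nk k : ℝ) ^ (m - 1)) ^ 2
        ≤ 4 ^ (m - 1) := by
  set S := (Finset.range (j + 1)).filter
      (fun k => 1 ≤ k ∧ nk k ≤ j ∧ j ≤ 2 * nk (k - 1)) with hS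
  set f : ℕ → ℕ := fun k => nk k ^ (m - 1) with hf
  have hfmono : Monotone f := fun a b hab => Nat.pow_le_pow_left (hmono.monotone hab) _
  have hfpos : ∀ k, 0 < f k := fun k => Nat.pow_pos (hpos k)
  -- natural telescoping bound
  have hnat : ∑ k ∈ S, (f k - f (k - 1)) ≤ j ^ (m - 1) := by
    rcases S.eq_empty_or_nonempty with h | h
    · simp [h]
    · set N := S.max' h with hN
      have hNmem := S.max'_mem h
      have hsub : S ⊆ Finset.Icc 1 N := fun k hk =>
        Finset.mem_Icc.2 ⟨(Finset.mem_filter.1 hk).2.1, Finset.le_max' _ _ hk⟩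
      have htel : ∑ k ∈ Finset.Icc 1 N, (f k - f (k - 1)) = f N - f 0 := by
        rw [← Finset.Ico_add_one_right_eq_Icc, Finset.sum_Ico_eq_sum_range]
        simp only [Nat.add_sub_cancel]
        have heq : ∀ i, f (1 + i) - f (1 + i - 1) = f (i + 1) - f i := by
          intro i
          rw [Nat.add_comm 1 i, Nat.add_sub_cancel]
        simp only [heq]
        exact Finset.sum_range_tsub hfmono N
      calc ∑ k ∈ S, (f k - f (k - 1))
          ≤ ∑ k ∈ Finset.Icc 1 N, (f k - f (k - 1)) :=
            Finset.sum_le_sum_of_subset hsub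
        _ = f N - f 0 := htel
        _ ≤ f N := Nat.sub_le _ _
        _ ≤ j ^ (m - 1) :=
            Nat.pow_le_pow_left (Finset.mem_filter.1 hNmem).2.2.1 _
  have hjpos : (0:ℝ) < (j:ℝ) ^ (m - 1) := pow_pos (by exact_mod_cast hj) _
  -- per-term bound
  have hterm : ∀ k ∈ S,
      ((nk k : ℝ) ^ (m - 1) - (nk (k - 1) : ℝ) ^ (m - 1)) / (nk k : ℝ) ^ (m - 1)
        ≤ ((f k - f (k - 1) : ℕ) : ℝ) * (2 ^ (m - 1) / (j:ℝ) ^ (m - 1)) := by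
    intro k hk
    obtain ⟨hkr, hk1, hkj, hjk⟩ :
        k ∈ Finset.range (j + 1) ∧ 1 ≤ k ∧ nk k ≤ j ∧ j ≤ 2 * nk (k - 1) := by
      have := Finset.mem_filter.1 hk
      exact ⟨this.1, this.2⟩
    have hle : f (k - 1) ≤ f k := hfmono (Nat.sub_le k 1)
    have hcast : ((f k - f (k - 1) : ℕ) : ℝ)
        = (nk k : ℝ) ^ (m - 1) - (nk (k - 1) : ℝ) ^ (m - 1) := by
      rw [Nat.cast_sub hle]
      simp only [hf]
      push_cast
      ring
    rw [div_eq_mul_inv, ← hcast]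
    apply mul_le_mul_of_nonneg_left _ (by positivity)
    -- (f k)⁻¹ ≤ 2^(m-1)/j^(m-1)
    have h2 : (j : ℝ) ^ (m - 1) ≤ 2 ^ (m - 1) * (nk k : ℝ) ^ (m - 1) := by
      have : j ≤ 2 * nk k := hjk.trans (Nat.mul_le_mul_left 2 (hmono.monotone (Nat.sub_le k 1)))
      calc (j : ℝ) ^ (m - 1) ≤ ((2 * nk k : ℕ) : ℝ) ^ (m - 1) := by
            exact_mod_cast Nat.pow_le_pow_left this _
        _ = 2 ^ (m - 1) * (nk k : ℝ) ^ (m - 1) := by push_cast; ring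
    have hnkpos : (0:ℝ) < (nk k : ℝ) ^ (m - 1) := pow_pos (by exact_mod_cast hpos k) _
    rw [inv_le_iff_one_le_mul₀ hnkpos, div_mul_eq_mul_div, le_div_iff₀ hjpos, one_mul]
    linarith
  have hsum1 : ∑ k ∈ S,
      ((nk k : ℝ) ^ (m - 1) - (nk (k - 1) : ℝ) ^ (m - 1)) / (nk k : ℝ) ^ (m - 1)
        ≤ 2 ^ (m - 1) := by
    calc ∑ k ∈ S, ((nk k : ℝ) ^ (m - 1) - (nk (k - 1) : ℝ) ^ (m - 1)) / (nk k : ℝ) ^ (m - 1)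
        ≤ ∑ k ∈ S, ((f k - f (k - 1) : ℕ) : ℝ) * (2 ^ (m - 1) / (j:ℝ) ^ (m - 1)) :=
          Finset.sum_le_sum hterm
      _ = ((∑ k ∈ S, (f k - f (k - 1)) : ℕ) : ℝ) * (2 ^ (m - 1) / (j:ℝ) ^ (m - 1)) := by
          rw [← Finset.sum_mul]; push_cast; ring
      _ ≤ ((j:ℝ) ^ (m - 1)) * (2 ^ (m - 1) / (j:ℝ) ^ (m - 1)) := by
          apply mul_le_mul_of_nonneg_right _ (by positivity)
          exact_mod_cast hnat
      _ = 2 ^ (m - 1) := by field_simp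
  refine ⟨hsum1, ?_⟩
  -- second sum: each term in [0,1], so square ≤ term
  have hsq : ∑ k ∈ S,
      (((nk k : ℝ) ^ (m - 1) - (nk (k - 1) : ℝ) ^ (m - 1)) / (nk k : ℝ) ^ (m - 1)) ^ 2
        ≤ ∑ k ∈ S,
      ((nk k : ℝ) ^ (m - 1) - (nk (k - 1) : ℝ) ^ (m - 1)) / (nk k : ℝ) ^ (m - 1) := by
    apply Finset.sum_le_sum
    intro k hk
    set t := ((nk k : ℝ) ^ (m - 1) - (nk (k - 1) : ℝ) ^ (m - 1)) / (nk k : ℝ) ^ (m - 1) with ht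
    have hle : f (k - 1) ≤ f k := hfmono (Nat.sub_le k 1)
    have hnkpos : (0:ℝ) < (nk k : ℝ) ^ (m - 1) := pow_pos (by exact_mod_cast hpos k) _
    have hnum : (0:ℝ) ≤ (nk k : ℝ) ^ (m - 1) - (nk (k - 1) : ℝ) ^ (m - 1) := by
      have : ((f (k-1) : ℕ):ℝ) ≤ ((f k : ℕ):ℝ) := by exact_mod_cast hle
      simp only [hf] at this; push_cast at this; linarith
    have ht0 : 0 ≤ t := div_nonneg hnum hnkpos.le
    have ht1 : t ≤ 1 := by
      rw [ht, div_le_one hnkpos]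
      have : (0:ℝ) ≤ (nk (k - 1) : ℝ) ^ (m - 1) := by positivity
      linarith
    calc t ^ 2 = t * t := sq t
      _ ≤ 1 * t := mul_le_mul_of_nonneg_right ht1 ht0
      _ = t := one_mul t
  have h24 : (2:ℝ) ^ (m - 1) ≤ 4 ^ (m - 1) :=
    pow_le_pow_left₀ (by norm_num) (by norm_num) _
  linarith
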